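/- Message reuse across queries: given a junction tree and two annotation assignments (to bags) for two queries, if a directed edge u → v is present in both and the annotations on the subtree rooted at u (away from v) coincide for both queries, then the message along u → v computed for the two queries is identical, irrespective of traversal order or choice of root. -/
import Mathlib


open Finset

variable {Att : Type*} [Fintype Att] [DecidableEq Att]
variable {Val : Att → Type*} [∀ a, Fintype (Val a)] [∀ a, DecidableEq (Val a)]
variable {D : Type*} [CommSemiring D]

/-- `R` depends only on the attributes in schema `S`. -/
def DependsOnlyOn (R : (∀ a, Val a) → D) (S : Finset Att) : Prop :=
  ∀ t₁ t₂ : ∀ a, Val a, (∀ a ∈ S, t₁ a = t₂ a) → R t₁ = R t₂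

/-- Join of annotated relations: multiply the annotations. -/
def joinRel (R T : (∀ a, Val a) → D) : (∀ a, Val a) → D := fun t => R t * T t

/-- Marginalize out a single attribute `A`: sum over all values of `A`. -/
def marg (A : Att) (R : (∀ a, Val a) → D) : (∀ a, Val a) → D :=
  fun t => ∑ v : Val A, R (Function.update t A v)

/-- Marginalize out all attributes in `E`. -/
def margOver (E : Finset Att) (R : (∀ a, Val a) → D) : (∀ a, Val a) → D :=
  fun t => ∑ s : ∀ a, Val a, if ∀ a, a ∉ E → s a = t a then R s else 0

variable {V : Type*} [Fintype V] [DecidableEq V]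

/-- `w` lies in the subtree rooted at `u` away from `v`: there is a walk from
`w` to `u` that avoids `v`. -/
def InSubtree (G : SimpleGraph V) (u v w : V) : Prop :=
  ∃ p : G.Walk w u, v ∉ p.support

/-- The running intersection property: if an attribute belongs to two bags then
it belongs to every bag on the path between them. -/
def RunningIntersection (G : SimpleGraph V) (bag : V → Finset Att) : Prop :=
  ∀ (a : Att) (u v : V) (p : G.Walk u v), p.IsPath →
    a ∈ bag u → a ∈ bag v → ∀ w ∈ p.support, a ∈ bag w

/-- `M` is a message system for the junction tree `(G, bag)` with local
relations `L`: the message `u → v` marginalizes, onto the attributes shared by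
`u` and `v`, the join of `u`'s local relation with all incoming messages from
`u`'s neighbors other than `v`. -/
def MsgSystem (G : SimpleGraph V) [DecidableRel G.Adj] (bag : V → Finset Att)
    (L : V → (∀ a, Val a) → D) (M : V → V → (∀ a, Val a) → D) : Prop :=
  ∀ u v, G.Adj u v →
    M u v = margOver (bag u \ bag v)
      (fun t => L u t * ∏ w ∈ (G.neighborFinset u).erase v, M w u t)

/-- Absorption at a bag: join of its local relation with all incoming messages. -/
def absorb (G : SimpleGraph V) [DecidableRel G.Adj]
    (L : V → (∀ a, Val a) → D) (M : V → V → (∀ a, Val a) → D) (v : V) :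
    (∀ a, Val a) → D :=
  fun t => L v t * ∏ w ∈ G.neighborFinset v, M w v t

open scoped Classical in
/-- Message system for an annotated junction tree. Each bag `u` carries an
annotation: an operator `ann u` applied to the join of `u`'s (possibly
excluded/updated) local relations with the incoming messages (modeling
selection and relation-exclusion annotations), and a set `prot u` of group-by
protected attributes, which are not marginalized out by `u` nor by any bag
downstream of `u`. -/
def AnnMsgSystem (G : SimpleGraph V) [DecidableRel G.Adj] (bag : V → Finset Att)
    (L : V → (∀ a, Val a) → D)
    (ann : V → ((∀ a, Val a) → D) → ((∀ a, Val a) → D))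
    (prot : V → Finset Att)
    (M : V → V → (∀ a, Val a) → D) : Prop :=
  ∀ u v, G.Adj u v →
    M u v = margOver ((bag u \ bag v) \
        Finset.univ.filter (fun a => ∃ w, InSubtree G u v w ∧ a ∈ prot w))
      (ann u (fun t => L u t * ∏ w ∈ (G.neighborFinset u).erase v, M w u t))


lemma insubtree_self (G : SimpleGraph V) {u v : V} (huv : G.Adj u v) :
    InSubtree G u v u :=
  ⟨SimpleGraph.Walk.nil, by simp [huv.ne']⟩

lemma insubtree_not_root (G : SimpleGraph V) {u w : V} :
    ¬ InSubtree G w u u := by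
  rintro ⟨p, hp⟩
  exact hp p.start_mem_support

lemma insubtree_mono (G : SimpleGraph V) (hG : G.IsTree)
    {u v w : V} (huv : G.Adj u v) (huw : G.Adj u w) (hwv : w ≠ v) :
    ∀ x, InSubtree G w u x → InSubtree G u v x := by
  rintro x ⟨p, hp⟩
  have hvp : v ∉ p.support := by
    intro hv
    set q := p.dropUntil v hv with hq'
    have hq : u ∉ q.support := fun h => hp ((p.support_dropUntil_subset hv) h)
    have hP : u ∉ q.toPath.1.support := fun h => hq (q.support_bypass_subset h)
    have hpath2 : (SimpleGraph.Walk.cons huv.symm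
        (SimpleGraph.Walk.cons huw SimpleGraph.Walk.nil) : G.Walk v w).IsPath := by
      simp [SimpleGraph.Walk.isPath_def, huv.ne, huv.ne', huw.ne, huw.ne', hwv.symm]
    have := (hG.existsUnique_path v w).unique q.toPath.2 hpath2
    apply hP
    rw [this]
    simp
  exact ⟨p.concat huw.symm, by
    rw [SimpleGraph.Walk.support_concat]
    simp only [List.concat_eq_append, List.mem_append, List.mem_singleton]
    rintro (h | h)
    · exact hvp h
    · exact huv.ne' h⟩

lemma msg_reuse_aux (G : SimpleGraph V) [DecidableRel G.Adj]
    (hG : G.IsTree) (bag : V → Finset Att)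
    (L₁ L₂ : V → (∀ a, Val a) → D)
    (ann₁ ann₂ : V → ((∀ a, Val a) → D) → ((∀ a, Val a) → D))
    (prot₁ prot₂ : V → Finset Att)
    (M₁ M₂ : V → V → (∀ a, Val a) → D)
    (h₁ : AnnMsgSystem G bag L₁ ann₁ prot₁ M₁)
    (h₂ : AnnMsgSystem G bag L₂ ann₂ prot₂ M₂) :
    ∀ n (u v : V), G.Adj u v →
      Set.ncard {w | InSubtree G u v w} ≤ n →
      (∀ w, InSubtree G u v w → L₁ w = L₂ w) →
      (∀ w, InSubtree G u v w → ann₁ w = ann₂ w) →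
      (∀ w, InSubtree G u v w → prot₁ w = prot₂ w) →
      M₁ u v = M₂ u v := by
  intro n
  induction n with
  | zero =>
    intro u v huv hcard _ _ _
    have h0 : 0 < Set.ncard {w | InSubtree G u v w} :=
      (Set.ncard_pos (Set.toFinite _)).mpr ⟨u, insubtree_self G huv⟩
    omega
  | succ n ih =>
    intro u v huv hcard hL hA hP
    classical
    rw [h₁ u v huv, h₂ u v huv]
    have hfilt : (Finset.univ.filter (fun a => ∃ w, InSubtree G u v w ∧ a ∈ prot₁ w))
        = (Finset.univ.filter (fun a => ∃ w, InSubtree G u v w ∧ a ∈ prot₂ w)) := by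
      ext a
      simp only [Finset.mem_filter, Finset.mem_univ, true_and]
      constructor
      · rintro ⟨w, hw, hp⟩; exact ⟨w, hw, (hP w hw) ▸ hp⟩
      · rintro ⟨w, hw, hp⟩; exact ⟨w, hw, (hP w hw) ▸ hp⟩
    have hfun : (fun t => L₁ u t * ∏ w ∈ (G.neighborFinset u).erase v, M₁ w u t)
        = (fun t => L₂ u t * ∏ w ∈ (G.neighborFinset u).erase v, M₂ w u t) := by
      funext t
      rw [hL u (insubtree_self G huv)]
      congr 1
      apply Finset.prod_congr rfl
      intro w hw
      rw [Finset.mem_erase, SimpleGraph.mem_neighborFinset] at hw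
      obtain ⟨hwv, huw⟩ := hw
      have hmono := insubtree_mono G hG huv huw hwv
      have hss : {x | InSubtree G w u x} ⊂ {x | InSubtree G u v x} := by
        constructor
        · intro x hx; exact hmono x hx
        · intro hsub
          exact insubtree_not_root G (hsub (insubtree_self G huv))
      have hlt : Set.ncard {x | InSubtree G w u x} < Set.ncard {x | InSubtree G u v x} :=
        Set.ncard_lt_ncard hss (Set.toFinite _)
      exact congrFun (ih w u huw.symm (by omega)
        (fun x hx => hL x (hmono x hx))
        (fun x hx => hA x (hmono x hx))
        (fun x hx => hP x (hmono x hx))) t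
    rw [hfilt, hA u (insubtree_self G huv), hfun]

/-- Message reuse across queries: if a directed edge `u → v` is present in both
annotated junction trees and the annotations (and local relations) coincide on
the whole subtree rooted at `u` away from `v`, then the messages along `u → v`
computed for the two queries are identical, irrespective of traversal order or
choice of root. -/
theorem message_reuse_across_queries (G : SimpleGraph V) [DecidableRel G.Adj]
    (hG : G.IsTree) (bag : V → Finset Att)
    (hRI : RunningIntersection G bag)
    (L₁ L₂ : V → (∀ a, Val a) → D)
    (hL₁ : ∀ v, DependsOnlyOn (L₁ v) (bag v))
    (hL₂ : ∀ v, DependsOnlyOn (L₂ v) (bag v))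
    (ann₁ ann₂ : V → ((∀ a, Val a) → D) → ((∀ a, Val a) → D))
    (prot₁ prot₂ : V → Finset Att)
    (M₁ M₂ : V → V → (∀ a, Val a) → D)
    (h₁ : AnnMsgSystem G bag L₁ ann₁ prot₁ M₁)
    (h₂ : AnnMsgSystem G bag L₂ ann₂ prot₂ M₂)
    (u v : V) (huv : G.Adj u v)
    (hsameL : ∀ w, InSubtree G u v w → L₁ w = L₂ w)
    (hsameAnn : ∀ w, InSubtree G u v w → ann₁ w = ann₂ w)
    (hsameProt : ∀ w, InSubtree G u v w → prot₁ w = prot₂ w) :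
    M₁ u v = M₂ u v := by
  exact msg_reuse_aux G hG bag L₁ L₂ ann₁ ann₂ prot₁ prot₂ M₁ M₂ h₁ h₂
    (Set.ncard {w | InSubtree G u v w}) u v huv le_rfl hsameL hsameAnn hsameProt
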